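/- Hoffman–Wielandt inequality: for symmetric matrices A, B ∈ ℝ^{N×N} with eigenvalues λ₁(A) ≥ … ≥ λ_N(A) and λ₁(B) ≥ … ≥ λ_N(B), we have Σ_{i=1}^N (λ_i(A) − λ_i(B))² ≤ ‖A − B‖_F². -/

import Mathlib

open Matrix Finset

section aux
variable {N : ℕ}

lemma trace_diag_conj (d e : Fin N → ℝ) (W : Matrix (Fin N) (Fin N) ℝ) :
    Matrix.trace (Matrix.diagonal d * W * Matrix.diagonal e * Wᵀ)
      = ∑ i, ∑ j, d i * e j * (W i j)^2 := by
  have h1 : ∀ i j, (Matrix.diagonal d * W * Matrix.diagonal e) i j = d i * W i j * e j := by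
    intro i j; rw [Matrix.mul_diagonal, Matrix.diagonal_mul]
  simp only [Matrix.trace, Matrix.diag_apply, Matrix.mul_apply (M := Matrix.diagonal d * W * Matrix.diagonal e), Matrix.transpose_apply]
  refine Finset.sum_congr rfl fun i _ => Finset.sum_congr rfl fun j _ => by rw [h1]; ring

lemma trace_sq (M : Matrix (Fin N) (Fin N) ℝ) (hM : M.IsHermitian) :
    Matrix.trace (M * M) = ∑ i, ∑ j, (M i j)^2 := by
  have h : Mᵀ = M := by
    have := hM.eq
    rwa [Matrix.conjTranspose_eq_transpose_of_trivial] at this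
  simp only [Matrix.trace, Matrix.diag_apply, Matrix.mul_apply]
  refine Finset.sum_congr rfl fun i _ => Finset.sum_congr rfl fun j _ => ?_
  rw [show M j i = Mᵀ i j from rfl, h, sq]

end aux

section key
variable {N : ℕ} {A B : Matrix (Fin N) (Fin N) ℝ}

lemma trace_mul_repr (hA : A.IsHermitian) (hB : B.IsHermitian) :
    Matrix.trace (A * B) = ∑ i, ∑ j, hA.eigenvalues i * hB.eigenvalues j *
      ((star (hA.eigenvectorUnitary : Matrix (Fin N) (Fin N) ℝ) *
        (hB.eigenvectorUnitary : Matrix (Fin N) (Fin N) ℝ)) i j)^2 := by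
  set U : Matrix (Fin N) (Fin N) ℝ := (hA.eigenvectorUnitary : Matrix (Fin N) (Fin N) ℝ) with hUdef
  set V : Matrix (Fin N) (Fin N) ℝ := (hB.eigenvectorUnitary : Matrix (Fin N) (Fin N) ℝ) with hVdef
  set d := hA.eigenvalues
  set e := hB.eigenvalues
  set W : Matrix (Fin N) (Fin N) ℝ := star U * V with hWdef
  have hU1 : star U * U = 1 := Matrix.mem_unitaryGroup_iff'.mp hA.eigenvectorUnitary.2
  have hU2 : U * star U = 1 := Matrix.mem_unitaryGroup_iff.mp hA.eigenvectorUnitary.2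
  have hV2 : V * star V = 1 := Matrix.mem_unitaryGroup_iff.mp hB.eigenvectorUnitary.2
  have hAeq : A = U * Matrix.diagonal d * star U := by
    have := hA.spectral_theorem
    simpa [RCLike.ofReal_real_eq_id] using this
  have hBeq : B = V * Matrix.diagonal e * star V := by
    have := hB.spectral_theorem
    simpa [RCLike.ofReal_real_eq_id] using this
  have hWt : Wᵀ = star V * U := by
    rw [hWdef, Matrix.transpose_mul, Matrix.star_eq_conjTranspose,
      Matrix.star_eq_conjTranspose, Matrix.conjTranspose_eq_transpose_of_trivial,
      Matrix.conjTranspose_eq_transpose_of_trivial, Matrix.transpose_transpose]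
  have key : U * (Matrix.diagonal d * W * Matrix.diagonal e * Wᵀ) * star U = A * B := by
    rw [hAeq, hBeq, hWt, hWdef]
    simp only [Matrix.mul_assoc]
    rw [hU2]
    simp only [Matrix.mul_one]
  rw [← trace_diag_conj d e W, ← key, Matrix.trace_mul_comm, ← Matrix.mul_assoc, hU1, Matrix.one_mul]

lemma trace_mul_le (hA : A.IsHermitian) (hB : B.IsHermitian) :
    Matrix.trace (A * B) ≤
      ∑ i, (hA.eigenvalues ∘ Tuple.sort hA.eigenvalues) i *
        (hB.eigenvalues ∘ Tuple.sort hB.eigenvalues) i := by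
  rw [trace_mul_repr hA hB]
  set U : Matrix (Fin N) (Fin N) ℝ := (hA.eigenvectorUnitary : Matrix (Fin N) (Fin N) ℝ) with hUdef
  set V : Matrix (Fin N) (Fin N) ℝ := (hB.eigenvectorUnitary : Matrix (Fin N) (Fin N) ℝ) with hVdef
  set d := hA.eigenvalues
  set e := hB.eigenvalues
  set W : Matrix (Fin N) (Fin N) ℝ := star U * V with hWdef
  have hU1 : star U * U = 1 := Matrix.mem_unitaryGroup_iff'.mp hA.eigenvectorUnitary.2
  have hU2 : U * star U = 1 := Matrix.mem_unitaryGroup_iff.mp hA.eigenvectorUnitary.2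
  have hV1 : star V * V = 1 := Matrix.mem_unitaryGroup_iff'.mp hB.eigenvectorUnitary.2
  have hV2 : V * star V = 1 := Matrix.mem_unitaryGroup_iff.mp hB.eigenvectorUnitary.2
  have hWt : Wᵀ = star V * U := by
    rw [hWdef, Matrix.transpose_mul, Matrix.star_eq_conjTranspose,
      Matrix.star_eq_conjTranspose, Matrix.conjTranspose_eq_transpose_of_trivial,
      Matrix.conjTranspose_eq_transpose_of_trivial, Matrix.transpose_transpose]
  have hWW : W * Wᵀ = 1 := by
    rw [hWt, hWdef, Matrix.mul_assoc, ← Matrix.mul_assoc V, hV2, Matrix.one_mul, hU1]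
  have hWtW : Wᵀ * W = 1 := by
    rw [hWt, hWdef, Matrix.mul_assoc, ← Matrix.mul_assoc U, hU2, Matrix.one_mul, hV1]
  -- the doubly stochastic matrix of squared entries
  set S : Matrix (Fin N) (Fin N) ℝ := Matrix.of (fun i j => (W i j)^2) with hSdef
  have hS : S ∈ doublyStochastic ℝ (Fin N) := by
    rw [mem_doublyStochastic_iff_sum]
    refine ⟨fun i j => sq_nonneg _, fun i => ?_, fun j => ?_⟩
    · have := congrArg (fun M : Matrix (Fin N) (Fin N) ℝ => M i i) hWW
      simp only [Matrix.mul_apply, Matrix.transpose_apply, Matrix.one_apply_eq] at this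
      simpa [hSdef, sq] using this
    · have := congrArg (fun M : Matrix (Fin N) (Fin N) ℝ => M j j) hWtW
      simp only [Matrix.mul_apply, Matrix.transpose_apply, Matrix.one_apply_eq] at this
      simpa [hSdef, sq] using this
  -- the linear functional
  set L : Matrix (Fin N) (Fin N) ℝ → ℝ := fun M => ∑ i, ∑ j, d i * e j * M i j with hLdef
  have hL : IsLinearMap ℝ L := by
    constructor
    · intro x y
      simp [hLdef, Matrix.add_apply, mul_add, Finset.sum_add_distrib]
    · intro c x
      simp only [hLdef, Matrix.smul_apply, smul_eq_mul, Finset.mul_sum]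
      refine Finset.sum_congr rfl fun i _ => Finset.sum_congr rfl fun j _ => by ring
  set C : ℝ := ∑ i, (d ∘ Tuple.sort d) i * (e ∘ Tuple.sort e) i with hCdef
  have hmono : Monovary (d ∘ Tuple.sort d) (e ∘ Tuple.sort e) :=
    (Tuple.monotone_sort d).monovary (Tuple.monotone_sort e)
  have hperm : ∀ σ : Equiv.Perm (Fin N), ∑ i, d i * e (σ i) ≤ C := by
    intro σ
    set π := Tuple.sort d
    set ρ := Tuple.sort e
    have step1 : ∑ i, d i * e (σ i)
        = ∑ j, (d ∘ π) j * (e ∘ ρ) (((π.trans σ).trans ρ.symm) j) := by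
      refine (Fintype.sum_equiv π _ _ fun j => ?_).symm
      simp [Function.comp, Equiv.trans]
    rw [step1, hCdef]
    exact hmono.sum_mul_comp_perm_le_sum_mul
  have hPsub : {x : Matrix (Fin N) (Fin N) ℝ | ∃ σ : Equiv.Perm (Fin N), x = σ.permMatrix ℝ}
      ⊆ {x | L x ≤ C} := by
    rintro x ⟨σ, rfl⟩
    have : L (σ.permMatrix ℝ) = ∑ i, d i * e (σ i) := by
      simp only [hLdef, Equiv.Perm.permMatrix, PEquiv.toMatrix_apply, Equiv.toPEquiv_apply,
        Option.mem_def, Option.some.injEq, mul_ite, mul_one, mul_zero]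
      refine Finset.sum_congr rfl fun i _ => ?_
      simp [Finset.sum_ite_eq]
    simpa [Set.mem_setOf_eq, this] using hperm σ
  have hSc : S ∈ convexHull ℝ
      {x : Matrix (Fin N) (Fin N) ℝ | ∃ σ : Equiv.Perm (Fin N), x = σ.permMatrix ℝ} := by
    have h := doublyStochastic_eq_convexHull_permMatrix (R := ℝ) (n := Fin N)
    have : (doublyStochastic ℝ (Fin N) : Set (Matrix (Fin N) (Fin N) ℝ))
        = convexHull ℝ {x | ∃ σ : Equiv.Perm (Fin N), x = σ.permMatrix ℝ} := by
      rw [h]; congr 1; ext x; exact ⟨fun ⟨σ, hσ⟩ => ⟨σ, hσ.symm⟩, fun ⟨σ, hσ⟩ => ⟨σ, hσ.symm⟩⟩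
    rw [← this]; exact hS
  have := convexHull_min hPsub (convex_halfSpace_le hL C) hSc
  simpa [hLdef, hSdef] using this

end key

/-- The eigenvalues of a real symmetric matrix listed in nonincreasing order
(with multiplicity); defined as `0` for non-Hermitian matrices. -/
noncomputable def sortedEigs {N : ℕ} (A : Matrix (Fin N) (Fin N) ℝ) : Fin N → ℝ :=
  if h : A.IsHermitian then
    fun i => (h.eigenvalues ∘ Tuple.sort h.eigenvalues) i.rev
  else 0

/-- Hoffman–Wielandt inequality: for symmetric `A, B` with eigenvalues listed
in nonincreasing order, `Σᵢ (λᵢ(A) − λᵢ(B))² ≤ ‖A − B‖_F²`. -/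
theorem stmt_11 {N : ℕ} (A B : Matrix (Fin N) (Fin N) ℝ)
    (hA : A.IsHermitian) (hB : B.IsHermitian) :
    ∑ i, (sortedEigs A i - sortedEigs B i) ^ 2 ≤
      ∑ i, ∑ j, (A i j - B i j) ^ 2 := by
  set d := hA.eigenvalues with hd
  set e := hB.eigenvalues with he
  set f : Fin N → ℝ := d ∘ Tuple.sort d with hf
  set g : Fin N → ℝ := e ∘ Tuple.sort e with hg
  have hsA : ∀ i, sortedEigs A i = f i.rev := by
    intro i; rw [sortedEigs, dif_pos hA]
  have hsB : ∀ i, sortedEigs B i = g i.rev := by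
    intro i; rw [sortedEigs, dif_pos hB]
  -- LHS rewrite
  have h1 : ∑ i, (sortedEigs A i - sortedEigs B i)^2 = ∑ i, (f i - g i)^2 := by
    simp_rw [hsA, hsB]
    exact Fintype.sum_equiv Fin.revPerm _ _ fun i => by simp
  -- traces of squares
  have hAA : Matrix.trace (A * A) = ∑ i, d i ^ 2 := by
    rw [trace_mul_repr hA hA,
      Matrix.mem_unitaryGroup_iff'.mp hA.eigenvectorUnitary.2]
    simp [Matrix.one_apply, Finset.sum_ite_eq', sq, ite_pow, mul_ite]
    rfl
  have hBB : Matrix.trace (B * B) = ∑ i, e i ^ 2 := by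
    rw [trace_mul_repr hB hB,
      Matrix.mem_unitaryGroup_iff'.mp hB.eigenvectorUnitary.2]
    simp [Matrix.one_apply, Finset.sum_ite_eq', sq, ite_pow, mul_ite]
    rfl
  have hf2 : ∑ i, f i ^ 2 = ∑ i, d i ^ 2 := Equiv.sum_comp (Tuple.sort d) (fun x => d x ^ 2)
  have hg2 : ∑ i, g i ^ 2 = ∑ i, e i ^ 2 := Equiv.sum_comp (Tuple.sort e) (fun x => e x ^ 2)
  -- RHS rewrite
  have hAB : (A - B).IsHermitian := hA.sub hB
  have h2 : ∑ i, ∑ j, (A i j - B i j)^2 = Matrix.trace ((A - B) * (A - B)) := by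
    rw [trace_sq _ hAB]
    simp [Matrix.sub_apply]
  have h3 : Matrix.trace ((A - B) * (A - B))
      = Matrix.trace (A * A) - 2 * Matrix.trace (A * B) + Matrix.trace (B * B) := by
    rw [sub_mul, mul_sub, mul_sub, Matrix.trace_sub, Matrix.trace_sub, Matrix.trace_sub,
      Matrix.trace_mul_comm B A]
    ring
  have h4 : ∑ i, (f i - g i)^2
      = ∑ i, f i ^ 2 + ∑ i, g i ^ 2 - 2 * ∑ i, f i * g i := by
    have expand : ∀ i : Fin N, (f i - g i)^2 = (f i ^ 2 + g i ^ 2) - 2 * (f i * g i) :=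
      fun i => by ring
    simp_rw [expand]
    rw [Finset.sum_sub_distrib, Finset.sum_add_distrib, ← Finset.mul_sum]
  have key : Matrix.trace (A * B) ≤ ∑ i, f i * g i := trace_mul_le hA hB
  rw [h1, h2, h3, h4, hAA, hBB, ← hf2, ← hg2]
  linarith
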